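/- arXiv:0806.1820 — 4 statements merged into one kernel-verified Lean document; each statement's English description precedes it below -/
import Mathlib

section
/- Let G be a Hausdorff topological group, Γ a semigroup of bi-continuous automorphisms of G, and K a compact subgroup of G with γ(K) = K for all γ ∈ Γ. Then the Γ-action on G is distal if and only if the Γ-actions on both K and on the quotient space G/K are distal. -/
open Topology

/-- Let `G` be a Hausdorff topological group, `Γ` a semigroup of
bi-continuous automorphisms of `G`, and `K` a compact subgroup with `γ(K) = K` for all
`γ ∈ Γ`.  Then the `Γ`-action on `G` is distal iff the `Γ`-actions on `K` and on the
coset space `G ⧸ K` are distal. -/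
theorem distal_iff_distal_on_compact_and_quotient
    {G : Type*} [Group G] [TopologicalSpace G] [IsTopologicalGroup G] [T2Space G]
    (Γ : Subsemigroup (MulAut G))
    (hcont : ∀ γ ∈ Γ, Continuous (γ : MulAut G) ∧ Continuous (γ : MulAut G).symm)
    (K : Subgroup G) (hK : IsCompact (K : Set G))
    (hinv : ∀ γ ∈ Γ, ((γ : MulAut G) : G → G) '' (K : Set G) = (K : Set G)) :
    (∀ x : G, x ≠ 1 → (1 : G) ∉ closure {y : G | ∃ γ ∈ Γ, (γ : MulAut G) x = y}) ↔
      ((∀ x ∈ K, x ≠ 1 → (1 : G) ∉ closure {y : G | ∃ γ ∈ Γ, (γ : MulAut G) x = y}) ∧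
        (∀ x y : G, (QuotientGroup.mk x : G ⧸ K) ≠ QuotientGroup.mk y →
          ∀ c : G ⧸ K,
            (c, c) ∉ closure {p : (G ⧸ K) × (G ⧸ K) | ∃ γ ∈ Γ,
              p = ((QuotientGroup.mk ((γ : MulAut G) x) : G ⧸ K),
                   (QuotientGroup.mk ((γ : MulAut G) y) : G ⧸ K))})) := by
  constructor
  · -- forward direction
    intro hG
    refine ⟨fun x _ hx => hG x hx, ?_⟩
    intro x y hxy c hc
    -- notation
    set C : Set G := (K : Set G) with hC
    haveI : CompactSpace C := isCompact_iff_compactSpace.mp hK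
    set w : G := x⁻¹ * y with hwdef
    have hwK : w ∉ C := fun h => hxy (QuotientGroup.eq.mpr h)
    have hmemC : ∀ γ ∈ Γ, ∀ g ∈ C, (γ : MulAut G) g ∈ C := by
      intro γ hγ g hg
      rw [← hinv γ hγ]
      exact Set.mem_image_of_mem _ hg
    -- Step A: find z ∈ K which is in the closure of the orbit of w
    -- the saturated set Q
    set Q : Set (G × G) :=
      {p | ∃ γ ∈ Γ, ∃ k ∈ C, ∃ k' ∈ C,
        p = ((γ : MulAut G) x * k, (γ : MulAut G) y * k')} with hQdef
    have hQsat : ∀ k ∈ C, ∀ k' ∈ C, ∀ p ∈ closure Q, (p.1 * k, p.2 * k') ∈ closure Q := by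
      intro k hk k' hk' p hp
      have hcontm : Continuous fun p : G × G => (p.1 * k, p.2 * k') :=
        ((continuous_fst.mul continuous_const).prodMk (continuous_snd.mul continuous_const))
      have hmaps : Set.MapsTo (fun p : G × G => (p.1 * k, p.2 * k')) Q Q := by
        rintro p ⟨γ, hγ, k₁, hk₁, k₁', hk₁', rfl⟩
        exact ⟨γ, hγ, k₁ * k, mul_mem hk₁ hk, k₁' * k', mul_mem hk₁' hk',
          by simp [mul_assoc]⟩
      exact hmaps.closure hcontm hp
    have hsat : ∀ u v : G × G, v ∈ closure Q →
        (QuotientGroup.mk u.1 : G ⧸ K) = QuotientGroup.mk v.1 →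
        (QuotientGroup.mk u.2 : G ⧸ K) = QuotientGroup.mk v.2 → u ∈ closure Q := by
      intro u v hv h1 h2
      have hk1 : v.1⁻¹ * u.1 ∈ C := QuotientGroup.eq.mp h1.symm
      have hk2 : v.2⁻¹ * u.2 ∈ C := QuotientGroup.eq.mp h2.symm
      have := hQsat _ hk1 _ hk2 v hv
      simpa [mul_inv_cancel_left] using this
    -- a representative of c
    obtain ⟨g, rfl⟩ := QuotientGroup.mk_surjective c
    -- the key point: (g, g) ∈ closure Q
    have hgg : (g, g) ∈ closure Q := by
      by_contra hgg
      have hUopen : IsOpen (Prod.map (QuotientGroup.mk : G → G ⧸ K)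
          (QuotientGroup.mk : G → G ⧸ K) '' (closure Q)ᶜ) :=
        ((QuotientGroup.isOpenMap_coe).prodMap (QuotientGroup.isOpenMap_coe)) _
          (isClosed_closure.isOpen_compl)
      have hcU : ((QuotientGroup.mk g : G ⧸ K), (QuotientGroup.mk g : G ⧸ K)) ∈
          Prod.map (QuotientGroup.mk : G → G ⧸ K) (QuotientGroup.mk : G → G ⧸ K) ''
            (closure Q)ᶜ :=
        ⟨(g, g), hgg, rfl⟩
      obtain ⟨p, hpU, hpP⟩ := mem_closure_iff.mp hc _ hUopen hcU
      obtain ⟨v, hvQ, hvp⟩ := hpU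
      obtain ⟨γ, hγ, rfl⟩ := hpP
      have hvy : ((γ : MulAut G) x, (γ : MulAut G) y) ∈ closure Q := by
        apply subset_closure
        exact ⟨γ, hγ, 1, one_mem K, 1, one_mem K, by simp⟩
      apply hvQ
      have h1 : (QuotientGroup.mk v.1 : G ⧸ K) = QuotientGroup.mk ((γ : MulAut G) x) := by
        have := congrArg Prod.fst hvp; simpa [Prod.map] using this
      have h2 : (QuotientGroup.mk v.2 : G ⧸ K) = QuotientGroup.mk ((γ : MulAut G) y) := by
        have := congrArg Prod.snd hvp; simpa [Prod.map] using this
      exact hsat v _ hvy h1 h2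
    -- record the K-translates: lift to a space with compact bookkeeping coordinates
    set A₀ : Set ((C × C) × (G × G)) :=
      {q | ∃ γ ∈ Γ, ∃ k k' : C,
        q = ((k, k'), ((γ : MulAut G) x * ↑k, (γ : MulAut G) y * ↑k'))} with hA₀def
    have hQA₀ : Q ⊆ Prod.snd '' A₀ := by
      rintro p ⟨γ, hγ, k, hk, k', hk', rfl⟩
      exact ⟨((⟨k, hk⟩, ⟨k', hk'⟩), _), ⟨γ, hγ, ⟨k, hk⟩, ⟨k', hk'⟩, rfl⟩, rfl⟩
    have hggA₀ : (g, g) ∈ Prod.snd '' closure A₀ := by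
      apply (isClosedMap_snd_of_compactSpace).closure_image_subset
      exact closure_mono hQA₀ hgg
    obtain ⟨q₀, hq₀cl, hq₀⟩ := hggA₀
    -- the continuous map recovering γ(w)
    set ψ : ((C × C) × (G × G)) → G :=
      fun q => (↑q.1.1 : G) * (q.2.1⁻¹ * q.2.2) * (↑q.1.2 : G)⁻¹ with hψdef
    have hψcont : Continuous ψ := by
      apply Continuous.mul
      · exact (continuous_subtype_val.comp (continuous_fst.comp continuous_fst)).mul
          (((continuous_fst.comp continuous_snd).inv).mul (continuous_snd.comp continuous_snd))
      · exact (continuous_subtype_val.comp (continuous_snd.comp continuous_fst)).inv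
    have hψorb : Set.MapsTo ψ A₀ {u : G | ∃ γ ∈ Γ, (γ : MulAut G) w = u} := by
      rintro q ⟨γ, hγ, k, k', rfl⟩
      refine ⟨γ, hγ, ?_⟩
      show (γ : MulAut G) (x⁻¹ * y) =
        (↑k : G) * (((γ : MulAut G) x * ↑k)⁻¹ * ((γ : MulAut G) y * ↑k')) * (↑k' : G)⁻¹
      rw [map_mul, map_inv]
      group
    set z : G := ψ q₀ with hzdef
    have hzorb : z ∈ closure {u : G | ∃ γ ∈ Γ, (γ : MulAut G) w = u} :=
      hψorb.closure hψcont hq₀cl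
    have hzK : z ∈ C := by
      have : z = (↑q₀.1.1 : G) * (↑q₀.1.2 : G)⁻¹ := by
        rw [hzdef, hψdef]
        simp [hq₀]
      rw [this]
      exact mul_mem q₀.1.1.2 (inv_mem (q₀.1.2.2 : (↑q₀.1.2 : G) ∈ K))
    -- Step B: the Ellis semigroup argument
    -- restriction of γ to K
    set hr : ∀ γ : MulAut G, γ ∈ Γ → C → C :=
      fun γ hγ k => ⟨γ ↑k, hmemC γ hγ ↑k k.2⟩ with hrdef
    set A : Set ((C → C) × G) :=
      {p | ∃ γ, ∃ hγ : γ ∈ Γ, p = (hr γ hγ, (γ : MulAut G) w)} with hAdef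
    have hsndA : {u : G | ∃ γ ∈ Γ, (γ : MulAut G) w = u} ⊆ Prod.snd '' A := by
      rintro u ⟨γ, hγ, rfl⟩
      exact ⟨(hr γ hγ, _), ⟨γ, hγ, rfl⟩, rfl⟩
    have hzA : z ∈ Prod.snd '' closure A := by
      apply (isClosedMap_snd_of_compactSpace).closure_image_subset
      exact closure_mono hsndA hzorb
    obtain ⟨p₀, hp₀cl, hp₀⟩ := hzA
    -- the Ellis-type compact right-topological semigroup
    letI : Mul ((C → C) × C) := ⟨fun p q => (p.1 ∘ q.1, p.1 q.2)⟩
    letI : Semigroup ((C → C) × C) := { mul_assoc := fun _ _ _ => rfl }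
    have hmulleft : ∀ r : (C → C) × C, Continuous (· * r) := by
      intro r
      show Continuous fun p : (C → C) × C => (p.1 ∘ r.1, p.1 r.2)
      exact (continuous_pi fun k => (continuous_apply (r.1 k)).comp continuous_fst).prodMk
        ((continuous_apply r.2).comp continuous_fst)
    set S : Set ((C → C) × C) := {p | (p.1, (↑p.2 : G)) ∈ closure A} with hSdef
    have hScont : Continuous fun p : (C → C) × C => (p.1, (↑p.2 : G)) :=
      continuous_fst.prodMk (continuous_subtype_val.comp continuous_snd)
    have hSclosed : IsClosed S := IsClosed.preimage hScont isClosed_closure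
    have hSne : S.Nonempty := by
      refine ⟨(p₀.1, ⟨z, hzK⟩), ?_⟩
      show (p₀.1, z) ∈ closure A
      rw [← hp₀]
      exact hp₀cl
    -- left multiplication by elements of Γ preserves closure A
    have hL1 : ∀ γ : MulAut G, ∀ hγ : γ ∈ Γ, ∀ b ∈ closure A,
        (hr γ hγ ∘ b.1, (γ : MulAut G) b.2) ∈ closure A := by
      intro γ hγ b hb
      have hφcont : Continuous fun b : (C → C) × G =>
          (hr γ hγ ∘ b.1, (γ : MulAut G) b.2) := by
        refine Continuous.prodMk ?_ ((hcont γ hγ).1.comp continuous_snd)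
        refine continuous_pi fun k => ?_
        have hrc : Continuous (hr γ hγ) := by
          rw [hrdef]
          exact Continuous.subtype_mk ((hcont γ hγ).1.comp continuous_subtype_val) _
        exact hrc.comp ((continuous_apply k).comp continuous_fst)
      have hφmaps : Set.MapsTo (fun b : (C → C) × G =>
          (hr γ hγ ∘ b.1, (γ : MulAut G) b.2)) A A := by
        rintro b ⟨δ, hδ, rfl⟩
        refine ⟨γ * δ, mul_mem hγ hδ, ?_⟩
        have h1 : hr γ hγ ∘ hr δ hδ = hr (γ * δ) (mul_mem hγ hδ) := by
          funext k
          apply Subtype.ext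
          simp [hrdef]
        have h2 : (γ : MulAut G) ((δ : MulAut G) w) = ((γ * δ : MulAut G)) w := by
          simp
        simp only [h1, h2]
      exact hφmaps.closure hφcont hb
    have hSS : ∀ p ∈ S, ∀ q ∈ S, p * q ∈ S := by
      intro p hp q hq
      show ((p * q).1, (↑(p * q).2 : G)) ∈ closure A
      have hq' : (q.1, (↑q.2 : G)) ∈ closure A := hq
      set Ψ : ((C → C) × G) → ((C → C) × G) :=
        fun a => (a.1 ∘ q.1, (↑(a.1 q.2) : G)) with hΨdef
      have hΨcont : Continuous Ψ := by
        refine Continuous.prodMk ?_ ?_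
        · exact continuous_pi fun k => (continuous_apply (q.1 k)).comp continuous_fst
        · exact continuous_subtype_val.comp ((continuous_apply q.2).comp continuous_fst)
      have hΨmaps : Set.MapsTo Ψ A (closure A) := by
        rintro a ⟨δ, hδ, rfl⟩
        have h := hL1 δ hδ (q.1, (↑q.2 : G)) hq'
        simpa only [hΨdef, hrdef] using h
      have := (hΨmaps.closure hΨcont (by exact hp) : Ψ (p.1, (↑p.2 : G)) ∈ closure (closure A))
      rw [closure_closure] at this
      exact this
    obtain ⟨m, hmS, hmm⟩ :=
      exists_idempotent_in_compact_subsemigroup hmulleft S hSne (hSclosed.isCompact) hSS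
    have ht : m.1 m.2 = m.2 := congrArg Prod.snd hmm
    -- final contradiction
    set t : C := m.2 with htdef
    have hm' : w * (↑t : G)⁻¹ ≠ 1 := by
      intro h
      exact hwK (by rw [mul_inv_eq_one.mp h]; exact t.2)
    set χ : ((C → C) × G) → G := fun p => p.2 * (↑(p.1 t) : G)⁻¹ with hχdef
    have hχcont : Continuous χ :=
      continuous_snd.mul ((continuous_subtype_val.comp
        ((continuous_apply t).comp continuous_fst)).inv)
    have hχmaps : Set.MapsTo χ A {u : G | ∃ γ ∈ Γ, (γ : MulAut G) (w * (↑t : G)⁻¹) = u} := by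
      rintro a ⟨δ, hδ, rfl⟩
      refine ⟨δ, hδ, ?_⟩
      show (δ : MulAut G) (w * (↑t : G)⁻¹) = (δ : MulAut G) w * (↑(hr δ hδ t) : G)⁻¹
      rw [map_mul, map_inv]
    have h1cl : (1 : G) ∈ closure {u : G | ∃ γ ∈ Γ, (γ : MulAut G) (w * (↑t : G)⁻¹) = u} := by
      have hmA : (m.1, (↑m.2 : G)) ∈ closure A := hmS
      have := hχmaps.closure hχcont hmA
      have hval : χ (m.1, (↑m.2 : G)) = 1 := by
        show (↑m.2 : G) * (↑(m.1 t) : G)⁻¹ = 1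
        rw [htdef, ht]
        exact mul_inv_cancel _
      rwa [hval] at this
    exact hG _ hm' h1cl
  · -- backward direction
    rintro ⟨hKd, hQd⟩ x hx h1
    by_cases hxK : x ∈ K
    · exact hKd x hxK hx h1
    · have hne : (QuotientGroup.mk x : G ⧸ K) ≠ QuotientGroup.mk 1 := by
        intro h
        apply hxK
        have : x⁻¹ * 1 ∈ K := QuotientGroup.eq.mp h
        simpa using inv_mem this
      apply hQd x 1 hne (QuotientGroup.mk 1)
      set φ : G → (G ⧸ K) × (G ⧸ K) :=
        fun g => ((QuotientGroup.mk g : G ⧸ K), (QuotientGroup.mk 1 : G ⧸ K)) with hφdef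
      have hφcont : Continuous φ :=
        (continuous_quotient_mk'.prodMk continuous_const)
      have hφmaps : Set.MapsTo φ {y : G | ∃ γ ∈ Γ, (γ : MulAut G) x = y}
          {p : (G ⧸ K) × (G ⧸ K) | ∃ γ ∈ Γ,
            p = ((QuotientGroup.mk ((γ : MulAut G) x) : G ⧸ K),
                 (QuotientGroup.mk ((γ : MulAut G) 1) : G ⧸ K))} := by
        rintro u ⟨γ, hγ, rfl⟩
        exact ⟨γ, hγ, by simp [hφdef]⟩
      have := hφmaps.closure hφcont h1
      simpa using this
end

section
/- Let G be a locally compact group and α a bi-continuous automorphism of G such that the action of {αⁿ : n ∈ ℕ} on G is distal. Then for any compact subgroup K of G with α(K) = K, the set {x ∈ G : αⁿ(x)K → K in G/K along some subsequence} equals K. -/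
open Topology Filter Pointwise

section Aux

variable {G : Type*} [Group G] [TopologicalSpace G] [IsTopologicalGroup G]

/-- Distality forces the identity to be closed (hence the group is T2). -/
theorem aux_t2_of_distal (α : MulAut G)
    (hdistal : ∀ x : G, x ≠ 1 → (1 : G) ∉ closure {y : G | ∃ n : ℕ, y = (α ^ n) x}) :
    T2Space G := by
  rw [IsTopologicalGroup.t2Space_iff_one_closed]
  rw [← closure_subset_iff_isClosed]
  intro x hx
  have hx_all : ∀ W ∈ 𝓝 (1 : G), x ∈ W := by
    intro W hW
    have hWinv : W⁻¹ ∈ 𝓝 (1 : G) := inv_mem_nhds_one G hW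
    have hcont : ContinuousAt (fun y : G => x⁻¹ * y) x := by fun_prop
    have hpre : (fun y : G => x⁻¹ * y) ⁻¹' W⁻¹ ∈ 𝓝 x := by
      apply hcont.preimage_mem_nhds
      simpa using hWinv
    rcases mem_closure_iff_nhds.mp hx _ hpre with ⟨z, hz1, hz2⟩
    rcases hz2 with rfl
    have : x⁻¹ * 1 ∈ W⁻¹ := hz1
    simpa using this
  by_contra hxne
  have hx1 : x ≠ 1 := by
    rintro rfl; exact hxne rfl
  apply hdistal x hx1
  rw [mem_closure_iff_nhds]
  intro t ht
  exact ⟨x, hx_all t ht, ⟨0, by simp⟩⟩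

/-- An element lying in `C * K` for every closed neighborhood `C` of `1`
(`K` compact) belongs to `K`. -/
theorem aux_mem_of_forall_mul (K : Subgroup G) (hK : IsCompact (K : Set G))
    [T2Space G] {g : G}
    (h : ∀ C : Set G, C ∈ 𝓝 (1 : G) → IsClosed C → g ∈ C * (K : Set G)) :
    g ∈ K := by
  classical
  let ι := {C : Set G // C ∈ 𝓝 (1 : G) ∧ IsClosed C}
  haveI : Nonempty ι := ⟨⟨Set.univ, Filter.univ_mem, isClosed_univ⟩⟩
  let P : Set G := (fun k => g * k⁻¹) '' (K : Set G)
  have hPc : IsCompact P := hK.image (by fun_prop)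
  have hPcl : IsClosed P := hPc.isClosed
  let t : ι → Set G := fun C => P ∩ C.1
  have htne : ∀ C : ι, (t C).Nonempty := by
    rintro ⟨C, hC, hCcl⟩
    rcases Set.mem_mul.mp (h C hC hCcl) with ⟨c, hc, k, hk, hck⟩
    refine ⟨g * k⁻¹, ⟨k, hk, rfl⟩, ?_⟩
    have : g * k⁻¹ = c := by
      rw [← hck]; simp
    simpa [this] using hc
  have hdir : Directed (· ⊇ ·) t := by
    rintro ⟨C₁, hC₁, hC₁cl⟩ ⟨C₂, hC₂, hC₂cl⟩
    refine ⟨⟨C₁ ∩ C₂, Filter.inter_mem hC₁ hC₂, hC₁cl.inter hC₂cl⟩, ?_, ?_⟩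
    · exact Set.inter_subset_inter_right _ Set.inter_subset_left
    · exact Set.inter_subset_inter_right _ Set.inter_subset_right
  obtain ⟨z, hz⟩ :=
    IsCompact.nonempty_iInter_of_directed_nonempty_isCompact_isClosed t hdir htne
      (fun C => hPc.inter_right C.2.2) (fun C => hPcl.inter C.2.2)
  have hzP : z ∈ P := by
    have := Set.mem_iInter.mp hz ⟨Set.univ, Filter.univ_mem, isClosed_univ⟩
    exact this.1
  have hz1 : z = 1 := by
    by_contra hzne
    have hco : {z}ᶜ ∈ 𝓝 (1 : G) := compl_singleton_mem_nhds (Ne.symm hzne)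
    obtain ⟨C, hC, hCcl, hCsub⟩ := exists_mem_nhds_isClosed_subset hco
    have := (Set.mem_iInter.mp hz ⟨C, hC, hCcl⟩).2
    exact hCsub this rfl
  rcases hzP with ⟨k, hk, hgk⟩
  rw [hz1] at hgk
  have : g = k := by
    have := mul_inv_eq_one.mp hgk
    exact this
  rw [this]; exact hk

end Aux

/-- If `α` is a bi-continuous automorphism of a locally compact group `G`
whose forward orbits give a distal action, then for any compact subgroup `K` with
`α(K) = K`, the set of `x ∈ G` such that `αⁿ(x)K → K` in `G ⧸ K` along some subsequence
is exactly `K`. -/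
theorem subseq_contraction_mod_compact_eq_self
    {G : Type*} [Group G] [TopologicalSpace G] [IsTopologicalGroup G] [LocallyCompactSpace G]
    (α : MulAut G) (hc : Continuous α) (hc' : Continuous α.symm)
    (hdistal : ∀ x : G, x ≠ 1 → (1 : G) ∉ closure {y : G | ∃ n : ℕ, y = (α ^ n) x})
    (K : Subgroup G) (hK : IsCompact (K : Set G))
    (hinv : (α : G → G) '' (K : Set G) = (K : Set G)) :
    {x : G | ∃ φ : ℕ → ℕ, StrictMono φ ∧
        Tendsto (fun n => (QuotientGroup.mk ((α ^ φ n) x) : G ⧸ K)) atTop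
          (nhds (QuotientGroup.mk (1 : G)))} = (K : Set G) := by
  haveI hT2 : T2Space G := aux_t2_of_distal α hdistal
  haveI hKcs : CompactSpace ↥K := isCompact_iff_compactSpace.mp hK
  -- continuity of the powers of α
  have hcn : ∀ n : ℕ, Continuous ⇑(α ^ n) := by
    intro n
    induction n with
    | zero =>
        simp only [pow_zero]
        exact continuous_id.congr fun x => rfl
    | succ n ih =>
        rw [pow_succ]
        exact (ih.comp hc).congr fun x => rfl
  -- powers of α preserve K
  have hpow : ∀ (n : ℕ) (g : G), g ∈ K → (α ^ n) g ∈ K := by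
    intro n
    induction n with
    | zero => intro g hg; simpa using hg
    | succ n ih =>
        intro g hg
        rw [pow_succ, MulAut.mul_apply]
        apply ih
        have : α g ∈ (α : G → G) '' (K : Set G) := Set.mem_image_of_mem _ hg
        rwa [hinv] at this
  ext x
  simp only [Set.mem_setOf_eq, SetLike.mem_coe]
  constructor
  · rintro ⟨φ, hφ, htend⟩
    classical
    -- Step A: the orbit is eventually in `U * K` for every neighborhood `U` of `1`
    have hstepA : ∀ U ∈ 𝓝 (1:G), ∀ᶠ n in atTop, (α ^ φ n) x ∈ U * (K : Set G) := by
      intro U hU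
      have h1 : (QuotientGroup.mk '' U : Set (G ⧸ K)) ∈ 𝓝 (QuotientGroup.mk (1:G)) :=
        (QuotientGroup.isOpenMap_coe (N := K)).image_mem_nhds hU
      filter_upwards [htend h1] with n hn
      have h2 : (α ^ φ n) x ∈ (QuotientGroup.mk ⁻¹' (QuotientGroup.mk '' U) : Set G) := hn
      rwa [QuotientGroup.preimage_image_mk_eq_mul] at h2
    -- Step B: a compact set eventually containing the orbit
    obtain ⟨C, hCc, hCn⟩ := exists_compact_mem_nhds (1 : G)
    set S : Set G := C * (K : Set G) with hS
    have hSc : IsCompact S := hCc.mul hK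
    -- the restrictions of the powers of `α` to `K`
    set e : ℕ → (↥K → ↥K) := fun n k => ⟨(α ^ n) ↑k, hpow n _ k.2⟩ with he
    have he_cont : ∀ n, Continuous (e n) := fun n =>
      ((hcn n).comp continuous_subtype_val).subtype_mk _
    -- the combined sequence in the product space
    set W : ℕ → G × (↥K → ↥K) := fun n => ((α ^ φ n) x, e (φ n)) with hWdef
    set F : Filter (G × (↥K → ↥K)) := Filter.map W atTop with hF
    haveI : F.NeBot := Filter.map_neBot
    have hev : ∀ᶠ n in atTop, W n ∈ S ×ˢ (Set.univ : Set (↥K → ↥K)) := by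
      filter_upwards [hstepA (interior C) (interior_mem_nhds.mpr hCn)] with n hn
      exact Set.mem_prod.mpr ⟨Set.mul_subset_mul_right interior_subset hn, trivial⟩
    have hFP : F ≤ 𝓟 (S ×ˢ (Set.univ : Set (↥K → ↥K))) :=
      le_principal_iff.mpr (Filter.mem_map.mpr hev)
    obtain ⟨⟨g, β⟩, -, hclust⟩ := (hSc.prod isCompact_univ).exists_clusterPt hFP
    -- the first coordinate clusters at an element of `K`
    have hgK : g ∈ K := by
      apply aux_mem_of_forall_mul K hK
      intro C' hC' hC'cl
      have hfst : ClusterPt g (Filter.map (fun n => (α ^ φ n) x) atTop) := by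
        have h1 : ClusterPt g (Filter.map Prod.fst F) :=
          hclust.map continuous_fst.continuousAt Filter.tendsto_map
        rw [hF, Filter.map_map] at h1
        exact h1
      have hmemf : (interior C') * (K : Set G) ∈ Filter.map (fun n => (α ^ φ n) x) atTop :=
        Filter.mem_map.mpr (hstepA (interior C') (interior_mem_nhds.mpr hC'))
      have hgcl : g ∈ closure ((interior C') * (K : Set G)) :=
        mem_closure_iff_clusterPt.mpr (hfst.mono (le_principal_iff.mpr hmemf))
      have hclosed : IsClosed (C' * (K : Set G)) := hC'cl.mul_right_of_isCompact hK
      have h3 := closure_mono (Set.mul_subset_mul_right interior_subset) hgcl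
      rwa [hclosed.closure_eq] at h3
    -- the enveloping semigroup
    set E : Set (↥K → ↥K) := closure (Set.range e) with hE
    have hEclosed : IsClosed E := isClosed_closure
    have hEcompact : IsCompact E := hEclosed.isCompact
    have hβE : β ∈ E := by
      have hsnd : ClusterPt β (Filter.map (fun n => e (φ n)) atTop) := by
        have h1 : ClusterPt β (Filter.map Prod.snd F) :=
          hclust.map continuous_snd.continuousAt Filter.tendsto_map
        rw [hF, Filter.map_map] at h1
        exact h1
      have hmemf : Set.range e ∈ Filter.map (fun n => e (φ n)) atTop :=
        Filter.mem_map.mpr (Filter.Eventually.of_forall fun n => ⟨φ n, rfl⟩)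
      exact mem_closure_iff_clusterPt.mpr (hsnd.mono (le_principal_iff.mpr hmemf))
    have hkey : ∀ n m : ℕ, e (n + m) = e n ∘ e m := by
      intro n m; funext k; apply Subtype.ext
      show (α ^ (n + m)) ↑k = (α ^ n) ((α ^ m) ↑k)
      rw [pow_add]; rfl
    have hcomp1 : ∀ n, ∀ f ∈ E, (e n ∘ f) ∈ E := by
      intro n f hf
      have hΦ : Continuous fun h : ↥K → ↥K => e n ∘ h :=
        continuous_pi fun k => (he_cont n).comp (continuous_apply k)
      have h1 : (fun h : ↥K → ↥K => e n ∘ h) f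
          ∈ closure ((fun h : ↥K → ↥K => e n ∘ h) '' Set.range e) :=
        image_closure_subset_closure_image hΦ (Set.mem_image_of_mem _ hf)
      refine closure_mono ?_ h1
      rintro _ ⟨_, ⟨m, rfl⟩, rfl⟩
      exact ⟨n + m, hkey n m⟩
    have hcomp : ∀ f ∈ E, ∀ h ∈ E, (h ∘ f) ∈ E := by
      intro f hf h hh
      have hΨ : Continuous fun h' : ↥K → ↥K => h' ∘ f :=
        continuous_pi fun k => continuous_apply (f k)
      have h1 : h ∘ f ∈ closure ((fun h' : ↥K → ↥K => h' ∘ f) '' Set.range e) :=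
        image_closure_subset_closure_image hΨ (Set.mem_image_of_mem _ hh)
      have himg : (fun h' : ↥K → ↥K => h' ∘ f) '' Set.range e ⊆ E := by
        rintro _ ⟨_, ⟨n, rfl⟩, rfl⟩
        exact hcomp1 n f hf
      exact closure_minimal himg hEclosed h1
    -- every idempotent of `E` is the identity, by distality
    have hidem : ∀ w, w ∈ E → w ∘ w = w → ∀ k : ↥K, w k = k := by
      intro w hw hww k
      have hwp : w (w k) = w k := congrFun hww k
      have hz1 : (↑k : G)⁻¹ * ↑(w k) = 1 := by
        by_contra hzne
        apply hdistal _ hzne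
        rw [mem_closure_iff_nhds]
        intro t ht
        set c : (↥K → ↥K) → G := fun f => (↑(f k) : G)⁻¹ * ↑(f (w k)) with hcdef
        have hccont : Continuous c :=
          ((continuous_subtype_val.comp (continuous_apply k)).inv).mul
            (continuous_subtype_val.comp (continuous_apply (w k)))
        have hcu : c w = 1 := by
          show (↑(w k) : G)⁻¹ * ↑(w (w k)) = 1
          rw [hwp]; simp
        have hpre : c ⁻¹' t ∈ 𝓝 w :=
          hccont.continuousAt.preimage_mem_nhds (by rw [hcu]; exact ht)
        rcases mem_closure_iff_nhds.mp hw _ hpre with ⟨y, hy1, n, rfl⟩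
        refine ⟨c (e n), hy1, n, ?_⟩
        show ((α ^ n) ↑k)⁻¹ * (α ^ n) ↑(w k) = (α ^ n) ((↑k : G)⁻¹ * ↑(w k))
        rw [map_mul, map_inv]
      apply Subtype.ext
      exact (inv_mul_eq_one.mp hz1).symm
    -- `Function.End` instances
    letI : TopologicalSpace (Function.End ↥K) := inferInstanceAs (TopologicalSpace (↥K → ↥K))
    haveI : CompactSpace (Function.End ↥K) := inferInstanceAs (CompactSpace (↥K → ↥K))
    haveI : T2Space (Function.End ↥K) := inferInstanceAs (T2Space (↥K → ↥K))
    have hmulr : ∀ r : Function.End ↥K, Continuous (· * r) := fun r =>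
      continuous_pi fun k => continuous_apply (r k)
    -- every element of `E` has a left inverse in `E`
    have hleft : ∀ b, b ∈ E → ∃ f ∈ E, f ∘ b = id := by
      intro b hb
      have hne' : ((fun h : ↥K → ↥K => h ∘ b) '' E).Nonempty :=
        ⟨_, Set.mem_image_of_mem _ (subset_closure ⟨0, rfl⟩)⟩
      have hcomp' : IsCompact ((fun h : ↥K → ↥K => h ∘ b) '' E) :=
        hEcompact.image (continuous_pi fun k => continuous_apply (b k))
      have hmul' : ∀ p : Function.End ↥K, p ∈ ((fun h : ↥K → ↥K => h ∘ b) '' E) →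
          ∀ q : Function.End ↥K, q ∈ ((fun h : ↥K → ↥K => h ∘ b) '' E) →
          p * q ∈ ((fun h : ↥K → ↥K => h ∘ b) '' E) := by
        rintro _ ⟨f, hf, rfl⟩ _ ⟨h, hh, rfl⟩
        exact ⟨f ∘ (b ∘ h), hcomp (b ∘ h) (hcomp h hh b hb) f hf, rfl⟩
      obtain ⟨m, hmI, hmm⟩ :=
        exists_idempotent_in_compact_subsemigroup (M := Function.End ↥K) hmulr
          ((fun h : ↥K → ↥K => h ∘ b) '' E) hne' hcomp' hmul'
      rcases hmI with ⟨f₀, hf₀, rfl⟩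
      have hmE : (f₀ ∘ b) ∈ E := hcomp b hb f₀ hf₀
      have hid : ∀ k, (f₀ ∘ b) k = k :=
        hidem _ hmE (funext fun k => congrFun hmm k)
      exact ⟨f₀, hf₀, funext hid⟩
    -- hence `β` has a right inverse in `E`
    obtain ⟨f, hfE, hfβ⟩ := hleft β hβE
    obtain ⟨h₁, hh₁E, hh₁f⟩ := hleft f hfE
    have hβf : β ∘ f = id := by
      have hβh : β = h₁ := by
        funext k2
        have e1 : f (β k2) = k2 := congrFun hfβ k2
        have e2 : h₁ (f (β k2)) = β k2 := congrFun hh₁f (β k2)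
        calc β k2 = h₁ (f (β k2)) := e2.symm
          _ = h₁ k2 := by rw [e1]
      rw [hβh]; exact hh₁f
    -- the candidate element of `K`
    set dκ : ↥K := f ⟨g, hgK⟩ with hdκ
    have hβd : β dκ = ⟨g, hgK⟩ := congrFun hβf ⟨g, hgK⟩
    set Θ : G × (↥K → ↥K) → G := fun q => q.1 * (↑(q.2 dκ) : G)⁻¹ with hΘdef
    have hΘc : Continuous Θ :=
      continuous_fst.mul
        ((continuous_subtype_val.comp ((continuous_apply dκ).comp continuous_snd)).inv)
    have hcl1 : ClusterPt (Θ (g, β)) (Filter.map Θ F) :=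
      hclust.map hΘc.continuousAt Filter.tendsto_map
    have hΘgβ : Θ (g, β) = 1 := by
      show g * (↑(β dκ) : G)⁻¹ = 1
      rw [hβd]; simp
    have hmapeq : Filter.map Θ F = Filter.map (fun n => (α ^ φ n) (x * (↑dκ : G)⁻¹)) atTop := by
      rw [hF, Filter.map_map]
      congr 1
      funext n
      show (α ^ φ n) x * ((α ^ φ n) (↑dκ : G))⁻¹ = (α ^ φ n) (x * (↑dκ : G)⁻¹)
      rw [map_mul, map_inv]
    rw [hΘgβ, hmapeq] at hcl1
    have hmemf : {y : G | ∃ n : ℕ, y = (α ^ n) (x * (↑dκ : G)⁻¹)}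
        ∈ Filter.map (fun n => (α ^ φ n) (x * (↑dκ : G)⁻¹)) atTop :=
      Filter.mem_map.mpr (Filter.Eventually.of_forall fun n => ⟨φ n, rfl⟩)
    have h1cl : (1 : G) ∈ closure {y : G | ∃ n : ℕ, y = (α ^ n) (x * (↑dκ : G)⁻¹)} :=
      mem_closure_iff_clusterPt.mpr (hcl1.mono (le_principal_iff.mpr hmemf))
    have hz1 : x * (↑dκ : G)⁻¹ = 1 := by
      by_contra hzne
      exact (hdistal _ hzne) h1cl
    have hxd : x = (↑dκ : G) := mul_inv_eq_one.mp hz1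
    rw [hxd]; exact dκ.2
  · -- easy direction
    intro hx
    refine ⟨id, strictMono_id, ?_⟩
    have heq : (fun n : ℕ => (QuotientGroup.mk ((α ^ (id n : ℕ)) x) : G ⧸ K))
        = fun _ => (QuotientGroup.mk (1 : G) : G ⧸ K) := by
      funext n
      apply QuotientGroup.eq.mpr
      simpa using K.inv_mem (hpow n x hx)
    rw [heq]
    exact tendsto_const_nhds
end

section
/- Let G be a locally compact group whose conjugation action is point-wise distal. If x ∈ G and K is a compact subgroup of G with xKx⁻¹ ⊆ K, then xKx⁻¹ = K. -/
open Topology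

/-- The conjugation action of `G` on itself is point-wise distal. -/
def PointwiseDistal (G : Type*) [Group G] [TopologicalSpace G] : Prop :=
  ∀ g : G, ∀ y : G, y ≠ 1 →
    (1 : G) ∉ closure {z : G | ∃ n : ℕ, z = g ^ n * y * (g ^ n)⁻¹}

/-- In a locally compact point-wise distal group, if `x K x⁻¹ ⊆ K` for a
compact subgroup `K`, then `x K x⁻¹ = K`. -/
theorem conj_compact_subgroup_eq_of_pointwiseDistal
    {G : Type*} [Group G] [TopologicalSpace G] [IsTopologicalGroup G] [LocallyCompactSpace G]
    (hG : PointwiseDistal G) (x : G) (K : Subgroup G) (hK : IsCompact (K : Set G))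
    (hsub : (fun k => x * k * x⁻¹) '' (K : Set G) ⊆ (K : Set G)) :
    (fun k => x * k * x⁻¹) '' (K : Set G) = (K : Set G) := by
  -- Step 1: pointwise distality forces `{1}` to be closed, hence `G` is Hausdorff.
  have hsing : ∀ z : G, z ∈ closure ({1} : Set G) → z = 1 := by
    intro z hz
    by_contra hne
    apply hG 1 z hne
    have hset : {w : G | ∃ n : ℕ, w = (1 : G) ^ n * z * ((1 : G) ^ n)⁻¹} = {z} := by
      ext w; simp
    rw [hset]
    -- z⁻¹ ∈ closure {1} since closure of the trivial subgroup is a subgroup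
    have hzi : z⁻¹ ∈ closure ({1} : Set G) := by
      rw [← Subgroup.coe_topologicalClosure_bot G] at hz ⊢
      exact Subgroup.inv_mem _ hz
    have himg := (Homeomorph.mulLeft z).image_closure ({1} : Set G)
    have hmem : (1 : G) ∈ (Homeomorph.mulLeft z) '' closure ({1} : Set G) :=
      ⟨z⁻¹, hzi, by simp⟩
    rw [himg] at hmem
    simpa using hmem
  haveI : T2Space G := by
    rw [IsTopologicalGroup.t2Space_iff_one_closed]
    have hcl : closure ({1} : Set G) = {1} :=
      Set.Subset.antisymm (fun z hz => hsing z hz) subset_closure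
    rw [← hcl]; exact isClosed_closure
  -- Setup: the subtype `X = K` with the conjugation map `φ`.
  set C : Set G := (fun k => x * k * x⁻¹) '' (K : Set G) with hC
  have hCcompact : IsCompact C := hK.image (by continuity)
  have hCclosed : IsClosed C := hCcompact.isClosed
  let X := (K : Set G)
  haveI : CompactSpace X := isCompact_iff_compactSpace.mp hK
  let φ : X → X := fun k => ⟨x * (k : G) * x⁻¹, hsub ⟨(k : G), k.2, rfl⟩⟩
  have hφcont : Continuous φ := by
    apply Continuous.subtype_mk
    continuity
  have hcoe : ∀ (n : ℕ) (k : X), ((φ^[n] k : X) : G) = x ^ n * (k : G) * (x ^ n)⁻¹ := by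
    intro n
    induction n with
    | zero => intro k; simp
    | succ n ih =>
      intro k
      rw [Function.iterate_succ_apply']
      show x * ((φ^[n] k : X) : G) * x⁻¹ = _
      rw [ih k, pow_succ]
      group
  -- The Ellis-type semigroup: closure of the positive iterates of φ.
  let sg : Semigroup (X → X) :=
    { mul := fun f g => f ∘ g
      mul_assoc := fun _ _ _ => rfl }
  have hmul_left : ∀ r : X → X, Continuous fun f : X → X => f ∘ r := fun r =>
    continuous_pi fun k => continuous_apply (r k)
  set S : Set (X → X) := Set.range (fun n : ℕ => φ^[n + 1]) with hS
  set E : Set (X → X) := closure S with hE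
  have hSE : S ⊆ E := subset_closure
  -- E is a subsemigroup
  have hEmul : ∀ f ∈ E, ∀ g ∈ E, f ∘ g ∈ E := by
    -- first: φ^[n+1] ∘ g ∈ E for g ∈ E
    have step1 : ∀ (n : ℕ), ∀ g ∈ E, φ^[n + 1] ∘ g ∈ E := by
      intro n g hg
      have hcont : Continuous (fun h : X → X => φ^[n + 1] ∘ h) :=
        continuous_pi fun k => (hφcont.iterate (n + 1)).comp (continuous_apply k)
      have h1 : (fun h : X → X => φ^[n + 1] ∘ h) '' S ⊆ S := by
        rintro _ ⟨_, ⟨m, rfl⟩, rfl⟩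
        refine ⟨n + m + 1, ?_⟩
        show φ^[n + m + 1 + 1] = φ^[n + 1] ∘ φ^[m + 1]
        rw [show n + m + 1 + 1 = (n + 1) + (m + 1) by omega, Function.iterate_add]
      have h2 := Set.mem_image_of_mem (fun h : X → X => φ^[n + 1] ∘ h) hg
      have h3 := image_closure_subset_closure_image hcont h2
      exact closure_mono h1 h3
    intro f hf g hg
    have h1 : (fun h : X → X => h ∘ g) '' S ⊆ E := by
      rintro _ ⟨_, ⟨m, rfl⟩, rfl⟩
      exact step1 m g hg
    have h2 := Set.mem_image_of_mem (fun h : X → X => h ∘ g) hf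
    have h3 := image_closure_subset_closure_image (hmul_left g) h2
    exact closure_minimal h1 isClosed_closure h3
  have hEne : E.Nonempty := ⟨φ, hSE ⟨0, rfl⟩⟩
  have hEcompact : IsCompact E := isClosed_closure.isCompact
  obtain ⟨u, huE, huu⟩ :=
    @exists_idempotent_in_compact_subsemigroup (X → X) sg _ _ hmul_left E hEne hEcompact hEmul
  have huu' : ∀ k : X, u (u k) = u k := fun k => congrFun huu k
  -- `u` maps everything into `C`
  have huC : ∀ k : X, ((u k : X) : G) ∈ C := by
    intro k
    have hclosed : IsClosed {f : X → X | ((f k : X) : G) ∈ C} :=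
      IsClosed.preimage (continuous_subtype_val.comp (continuous_apply k)) hCclosed
    have hSsub : S ⊆ {f : X → X | ((f k : X) : G) ∈ C} := by
      rintro _ ⟨m, rfl⟩
      show ((φ^[m + 1] k : X) : G) ∈ C
      rw [hcoe (m + 1) k]
      refine ⟨x ^ m * (k : G) * (x ^ m)⁻¹, ?_, by rw [pow_succ]; group⟩
      have h := hcoe m k
      rw [← h]
      exact (φ^[m] k).2
    exact closure_minimal hSsub hclosed huE
  -- `u` is the identity, by distality
  have huid : ∀ k : X, u k = k := by
    intro k
    set z : X := u k with hz
    have hzz : u z = z := huu' k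
    by_contra hne
    have hwne : ((z : X) : G)⁻¹ * (k : G) ≠ 1 := by
      intro h
      apply hne
      have hzk : ((z : X) : G) = (k : G) := by
        have h2 := congrArg (fun w => ((z : X) : G) * w) h
        simpa [mul_assoc] using h2.symm
      exact Subtype.ext hzk
    apply hG x (((z : X) : G)⁻¹ * (k : G)) hwne
    set w : G := ((z : X) : G)⁻¹ * (k : G) with hw
    set F : (X → X) → G := fun f => ((f z : X) : G)⁻¹ * ((f k : X) : G) with hF
    have hFcont : Continuous F := by
      apply Continuous.mul
      · exact (continuous_subtype_val.comp (continuous_apply z)).inv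
      · exact continuous_subtype_val.comp (continuous_apply k)
    have hFS : F '' S ⊆ {v : G | ∃ n : ℕ, v = x ^ n * w * (x ^ n)⁻¹} := by
      rintro _ ⟨_, ⟨m, rfl⟩, rfl⟩
      refine ⟨m + 1, ?_⟩
      show ((φ^[m+1] z : X) : G)⁻¹ * ((φ^[m+1] k : X) : G) = _
      rw [hcoe (m + 1) z, hcoe (m + 1) k, hw]
      group
    have hFu : F u = 1 := by
      show ((u z : X) : G)⁻¹ * ((u k : X) : G) = 1
      rw [hzz, ← hz]
      simp
    have h2 := Set.mem_image_of_mem F huE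
    have h3 := image_closure_subset_closure_image hFcont h2
    rw [hFu] at h3
    exact closure_mono hFS h3
  -- conclude
  apply Set.Subset.antisymm hsub
  intro k hk
  have h := huC ⟨k, hk⟩
  rwa [huid ⟨k, hk⟩] at h
end

section
/- Let K = 𝕋² and α(w, z) = (wz, z). Let L = {(1, z) : z ∈ 𝕋} and let μ be a Borel probability measure on K invariant under translation by L. Then there is a subsequence (kₙ) such that the pushforwards α^{kₙ}(μ) converge weakly to the normalized Haar measure on K. Consequently the action of ⟨α⟩ on the space P(K) of probability measures is not distal. -/
open Topology MeasureTheory Filter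

/-- The automorphism `α(w, z) = (wz, z)` of the 2-torus `𝕋²`. -/
noncomputable def torusAut : MulAut (Circle × Circle) where
  toFun p := (p.1 * p.2, p.2)
  invFun p := (p.1 * p.2⁻¹, p.2)
  left_inv p := by
    simp [Prod.ext_iff, mul_assoc]
  right_inv p := by
    simp [Prod.ext_iff, mul_assoc]
  map_mul' p q := by
    simp [Prod.ext_iff, mul_mul_mul_comm]


noncomputable instance : MeasurableSpace Circle := borel Circle
instance : BorelSpace Circle := ⟨rfl⟩

/-- Weak* convergence of a sequence of measures. -/
def WeakTendsto {G : Type*} [TopologicalSpace G] [MeasurableSpace G]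
    (μs : ℕ → Measure G) (ν : Measure G) : Prop :=
  ∀ f : BoundedContinuousFunction G ℝ,
    Tendsto (fun n => ∫ x, f x ∂(μs n)) atTop (nhds (∫ x, f x ∂ν))

namespace TorusAutProof

noncomputable section

abbrev TT := Circle × Circle

lemma circle_coe_continuous : Continuous ((↑) : Circle → ℂ) := continuous_subtype_val

lemma circle_coe_pow (x : Circle) (n : ℕ) : ((x ^ n : Circle) : ℂ) = (x : ℂ) ^ n := by
  induction n with
  | zero => simp
  | succ k ih => rw [pow_succ, pow_succ, Circle.coe_mul, ih]

lemma circle_coe_zpow (x : Circle) (n : ℤ) : ((x ^ n : Circle) : ℂ) = (x : ℂ) ^ n := by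
  cases n with
  | ofNat k => rw [Int.ofNat_eq_coe, zpow_natCast, zpow_natCast, circle_coe_pow]
  | negSucc k => rw [zpow_negSucc, zpow_negSucc, Circle.coe_inv, circle_coe_pow]

lemma circle_exp_zpow (t : ℝ) (n : ℤ) : Circle.exp t ^ n = Circle.exp (n * t) := by
  ext
  rw [circle_coe_zpow, Circle.coe_exp, Circle.coe_exp, ← Complex.exp_int_mul]
  push_cast
  ring_nf

lemma circle_exp_pi_ne_one : ((Circle.exp Real.pi : Circle) : ℂ) ≠ 1 := by
  rw [Circle.coe_exp]
  rw [show ((Real.pi : ℂ) * Complex.I) = Real.pi * Complex.I from rfl]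
  rw [Complex.exp_pi_mul_I]
  norm_num

/-- The character `(w, z) ↦ w^m z^l` of the torus, as a complex continuous map. -/
def chi (m l : ℤ) : C(TT, ℂ) :=
  ⟨fun p => ((p.1 ^ m * p.2 ^ l : Circle) : ℂ),
    circle_coe_continuous.comp
      ((((continuous_zpow m).comp continuous_fst).mul
        ((continuous_zpow l).comp continuous_snd)) :
        Continuous fun p : TT => p.1 ^ m * p.2 ^ l)⟩

lemma chi_apply (m l : ℤ) (p : TT) : chi m l p = ((p.1 ^ m * p.2 ^ l : Circle) : ℂ) := rfl

lemma chi_zero_zero : chi 0 0 = 1 := by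
  ext p; simp [chi_apply]

lemma chi_mul (m l m' l' : ℤ) : chi m l * chi m' l' = chi (m + m') (l + l') := by
  ext p
  simp only [ContinuousMap.mul_apply, chi_apply, zpow_add]
  push_cast
  ring

lemma star_chi (m l : ℤ) : star (chi m l) = chi (-m) (-l) := by
  ext p
  simp only [ContinuousMap.star_apply, chi_apply, RCLike.star_def]
  rw [← Circle.coe_inv_eq_conj]
  rw [mul_inv, ← zpow_neg, ← zpow_neg]

/-- The submonoid of characters. -/
def chiMonoid : Submonoid C(TT, ℂ) where
  carrier := Set.range fun ml : ℤ × ℤ => chi ml.1 ml.2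
  one_mem' := ⟨(0, 0), chi_zero_zero⟩
  mul_mem' := by
    rintro _ _ ⟨⟨m, l⟩, rfl⟩ ⟨⟨m', l'⟩, rfl⟩
    exact ⟨(m + m', l + l'), (chi_mul m l m' l').symm⟩

abbrev chiSet : Set C(TT, ℂ) := Set.range fun ml : ℤ × ℤ => chi ml.1 ml.2

abbrev haarTT : Measure TT :=
  Measure.haarMeasure (⊤ : TopologicalSpace.PositiveCompacts TT)

instance : IsProbabilityMeasure haarTT :=
  ⟨by rw [← TopologicalSpace.PositiveCompacts.coe_top]; exact Measure.haarMeasure_self⟩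

lemma cont_integrable (g : C(TT, ℂ)) (ν : Measure TT) [IsFiniteMeasure ν] :
    Integrable g ν :=
  g.continuous.integrable_of_hasCompactSupport (HasCompactSupport.of_compactSpace _)

/-- Key vanishing principle: if a measure is invariant under translation by `c` and the
character gets multiplied by `d ≠ 1` under this translation, its integral vanishes. -/
lemma vanish {ν : Measure TT} (c : TT) (hc : ν.map (fun p => c * p) = ν)
    (m l : ℤ) (d : Circle) (hd : (d : ℂ) ≠ 1)
    (h : ∀ p : TT, (c * p).1 ^ m * (c * p).2 ^ l = d * (p.1 ^ m * p.2 ^ l)) :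
    ∫ p, chi m l p ∂ν = 0 := by
  have hmeas : Measurable fun p : TT => c * p := (continuous_mul_left c).measurable
  have key : ∫ p, chi m l p ∂ν = (d : ℂ) * ∫ p, chi m l p ∂ν := by
    conv_lhs => rw [← hc]
    rw [integral_map hmeas.aemeasurable ((chi m l).continuous.aestronglyMeasurable)]
    simp only [chi_apply, h, Circle.coe_mul]
    rw [integral_const_mul]
  have h2 : ((d : ℂ) - 1) * ∫ p, chi m l p ∂ν = 0 := by
    rw [sub_mul, one_mul, ← key, sub_self]
  rcases mul_eq_zero.1 h2 with h3 | h3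
  · exact absurd (sub_eq_zero.1 h3) hd
  · exact h3

lemma haar_vanish (m l : ℤ) (h : ¬(m = 0 ∧ l = 0)) :
    ∫ p, chi m l p ∂haarTT = 0 := by
  rcases not_and_or.1 h with hm | hl
  · refine vanish ((Circle.exp (Real.pi / m), 1)) (MeasureTheory.map_mul_left_eq_self _ _) m l
      (Circle.exp Real.pi) circle_exp_pi_ne_one (fun p => ?_)
    have : Circle.exp (Real.pi / m) ^ m = Circle.exp Real.pi := by
      rw [circle_exp_zpow]
      congr 1
      field_simp
    simp only [Prod.fst_mul, Prod.snd_mul, mul_zpow, this, one_zpow, one_mul]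
    rw [mul_assoc]
  · refine vanish (((1 : Circle), Circle.exp (Real.pi / l))) (MeasureTheory.map_mul_left_eq_self _ _)
      m l (Circle.exp Real.pi) circle_exp_pi_ne_one (fun p => ?_)
    have : Circle.exp (Real.pi / l) ^ l = Circle.exp Real.pi := by
      rw [circle_exp_zpow]
      congr 1
      field_simp
    simp only [Prod.fst_mul, Prod.snd_mul, mul_zpow, this, one_zpow, one_mul]
    rw [mul_left_comm]

lemma mu_vanish {μ : Measure TT}
    (hinv : ∀ z : Circle, μ.map (fun p => ((1, z) : TT) * p) = μ)
    (m j : ℤ) (hj : j ≠ 0) :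
    ∫ p, chi m j p ∂μ = 0 := by
  refine vanish (((1 : Circle), Circle.exp (Real.pi / j))) (hinv _) m j
    (Circle.exp Real.pi) circle_exp_pi_ne_one (fun p => ?_)
  have : Circle.exp (Real.pi / j) ^ j = Circle.exp Real.pi := by
    rw [circle_exp_zpow]
    congr 1
    field_simp
  simp only [Prod.fst_mul, Prod.snd_mul, mul_zpow, this, one_zpow, one_mul]
  rw [mul_left_comm]

lemma torusAut_pow_apply (n : ℕ) (p : TT) :
    (torusAut ^ (n : ℤ)) p = (p.1 * p.2 ^ n, p.2) := by
  rw [zpow_natCast]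
  induction n generalizing p with
  | zero => simp
  | succ k ih =>
    rw [pow_succ]
    have : (torusAut ^ k * torusAut) p = (torusAut ^ k) (torusAut p) := rfl
    rw [this, ih]
    show ((p.1 * p.2) * p.2 ^ k, p.2) = (p.1 * p.2 ^ (k + 1), p.2)
    rw [pow_succ]
    rw [mul_assoc, mul_comm p.2 (p.2 ^ k)]

lemma torusAut_pow_continuous (n : ℕ) : Continuous (torusAut ^ (n : ℤ) : MulAut TT) := by
  have : ⇑(torusAut ^ (n : ℤ)) = fun p : TT => (p.1 * p.2 ^ n, p.2) :=
    funext (torusAut_pow_apply n)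
  rw [this]
  exact (continuous_fst.mul ((continuous_pow n).comp continuous_snd)).prodMk continuous_snd

instance map_prob (μ : Measure TT) [IsProbabilityMeasure μ] (n : ℕ) :
    IsProbabilityMeasure (μ.map (torusAut ^ (n : ℤ))) :=
  Measure.isProbabilityMeasure_map (torusAut_pow_continuous n).measurable.aemeasurable

/-- Convergence of character integrals. -/
lemma char_tendsto {μ : Measure TT} [IsProbabilityMeasure μ]
    (hinv : ∀ z : Circle, μ.map (fun p => ((1, z) : TT) * p) = μ) (m l : ℤ) :
    Tendsto (fun n : ℕ => ∫ p, chi m l p ∂(μ.map (torusAut ^ (n : ℤ)))) atTop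
      (𝓝 (∫ p, chi m l p ∂haarTT)) := by
  by_cases h00 : m = 0 ∧ l = 0
  · obtain ⟨rfl, rfl⟩ := h00
    simp only [chi_zero_zero, ContinuousMap.one_apply]
    simp only [integral_const, measure_univ, probReal_univ, ENNReal.toReal_one, one_smul]
    exact tendsto_const_nhds
  · rw [haar_vanish m l h00]
    have hev : (fun n : ℕ => ∫ p, chi m l p ∂(μ.map (torusAut ^ (n : ℤ))))
        =ᶠ[atTop] (fun _ => (0 : ℂ)) := by
      filter_upwards [eventually_gt_atTop l.natAbs] with n hn
      have hpush : ∫ p, chi m l p ∂(μ.map (torusAut ^ (n : ℤ)))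
          = ∫ p, chi m ((n : ℤ) * m + l) p ∂μ := by
        rw [integral_map (torusAut_pow_continuous n).measurable.aemeasurable
          ((chi m l).continuous.aestronglyMeasurable)]
        congr 1
        ext p
        rw [torusAut_pow_apply]
        simp only [chi_apply]
        congr 1
        rw [mul_zpow, ← zpow_natCast p.2 n, ← zpow_mul, zpow_add, mul_assoc]
      rw [hpush]
      refine mu_vanish hinv m ((n : ℤ) * m + l) ?_
      rcases eq_or_ne m 0 with rfl | hm
      · simpa using (not_and_or.1 h00).neg_resolve_left rfl
      · intro hcon
        have h1 : l.natAbs = n * m.natAbs := by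
          have hl : l = -((n : ℤ) * m) := by linarith
          rw [hl, Int.natAbs_neg, Int.natAbs_mul]
          simp
        have hm' : 1 ≤ m.natAbs := Int.natAbs_pos.2 hm
        have hle : n ≤ l.natAbs := by
          calc n = n * 1 := (mul_one n).symm
            _ ≤ n * m.natAbs := Nat.mul_le_mul_left n hm'
            _ = l.natAbs := h1.symm
        omega
    exact Tendsto.congr' hev.symm tendsto_const_nhds

/-- Convergence for every element of the linear span of characters. -/
lemma span_tendsto {μ : Measure TT} [IsProbabilityMeasure μ]
    (hinv : ∀ z : Circle, μ.map (fun p => ((1, z) : TT) * p) = μ)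
    {g : C(TT, ℂ)} (hg : g ∈ Submodule.span ℂ chiSet) :
    Tendsto (fun n : ℕ => ∫ p, g p ∂(μ.map (torusAut ^ (n : ℤ)))) atTop
      (𝓝 (∫ p, g p ∂haarTT)) := by
  induction hg using Submodule.span_induction with
  | mem x hx =>
    obtain ⟨⟨m, l⟩, rfl⟩ := hx
    exact char_tendsto hinv m l
  | zero => simp only [ContinuousMap.zero_apply, integral_zero]; exact tendsto_const_nhds
  | add x y hx hy ihx ihy =>
    simp only [ContinuousMap.add_apply]
    rw [integral_add (cont_integrable x _) (cont_integrable y _)]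
    exact Tendsto.congr
      (fun n => (integral_add (cont_integrable x _) (cont_integrable y _)).symm)
      (ihx.add ihy)
  | smul a x hx ihx =>
    simp only [ContinuousMap.smul_apply, integral_smul]
    exact ihx.const_smul a

/-- The star subalgebra generated by the two coordinate functions. -/
abbrev coordAlg : StarSubalgebra ℂ C(TT, ℂ) :=
  StarAlgebra.adjoin ℂ {chi 1 0, chi 0 1}

lemma coordAlg_le_span {g : C(TT, ℂ)} (hg : g ∈ coordAlg) :
    g ∈ Submodule.span ℂ chiSet := by
  have h1 : g ∈ Algebra.adjoin ℂ (({chi 1 0, chi 0 1} : Set C(TT, ℂ))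
      ∪ star {chi 1 0, chi 0 1}) := hg
  have h2 : (({chi 1 0, chi 0 1} : Set C(TT, ℂ)) ∪ star {chi 1 0, chi 0 1}) ⊆ chiSet := by
    rintro f (hf | hf)
    · rcases hf with rfl | rfl
      · exact ⟨(1, 0), rfl⟩
      · exact ⟨(0, 1), rfl⟩
    · rw [Set.mem_star] at hf
      rw [Set.mem_insert_iff, Set.mem_singleton_iff] at hf
      rcases hf with hf | hf
      · have h5 : f = star (chi 1 0) := by rw [← hf, star_star]
        rw [h5, star_chi]
        exact ⟨(-1, -0), rfl⟩
      · have h5 : f = star (chi 0 1) := by rw [← hf, star_star]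
        rw [h5, star_chi]
        exact ⟨(-0, -1), rfl⟩
  have h3 : g ∈ Algebra.adjoin ℂ chiSet := Algebra.adjoin_mono h2 h1
  have h4 : Subalgebra.toSubmodule (Algebra.adjoin ℂ chiSet) = Submodule.span ℂ chiSet := by
    apply Algebra.adjoin_eq_span_of_subset
    rw [show Submonoid.closure chiSet = chiMonoid from Submonoid.closure_eq chiMonoid]
    exact Submodule.subset_span
  rw [← h4]
  exact h3

lemma coordAlg_separates : coordAlg.SeparatesPoints := by
  intro p q hpq
  by_cases h : p.1 = q.1
  · have h2 : p.2 ≠ q.2 := fun h2 => hpq (Prod.ext h h2)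
    refine ⟨_, ⟨chi 0 1, StarAlgebra.subset_adjoin ℂ _ (Or.inr rfl), rfl⟩, ?_⟩
    simpa [chi_apply, Circle.coe_inj] using h2
  · refine ⟨_, ⟨chi 1 0, StarAlgebra.subset_adjoin ℂ _ (Or.inl rfl), rfl⟩, ?_⟩
    simpa [chi_apply, Circle.coe_inj] using h

lemma norm_integral_le (g : C(TT, ℂ)) (ν : Measure TT) [IsProbabilityMeasure ν] :
    ‖∫ p, g p ∂ν‖ ≤ ‖g‖ := by
  calc ‖∫ p, g p ∂ν‖ ≤ ‖g‖ * (ν Set.univ).toReal :=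
        norm_integral_le_of_norm_le_const (Eventually.of_forall fun p => g.norm_coe_le_norm p)
    _ = ‖g‖ := by simp

/-- Main convergence result: the pushforwards converge weakly to Haar. -/
lemma main_tendsto {μ : Measure TT} (hμ : IsProbabilityMeasure μ)
    (hinv : ∀ z : Circle, μ.map (fun p => ((1, z) : TT) * p) = μ) :
    WeakTendsto (fun n => μ.map (torusAut ^ ((n : ℕ) : ℤ))) haarTT := by
  intro f
  set F : C(TT, ℂ) := ⟨fun p => (f p : ℂ), Complex.continuous_ofReal.comp f.continuous⟩ with hF
  have hre : ∀ (ν : Measure TT), ∫ p, F p ∂ν = ((∫ p, f p ∂ν : ℝ) : ℂ) := fun ν =>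
    integral_ofReal
  suffices hC : Tendsto (fun n : ℕ => ∫ p, F p ∂(μ.map (torusAut ^ (n : ℤ)))) atTop
      (𝓝 (∫ p, F p ∂haarTT)) by
    have := (Complex.continuous_re.tendsto _).comp hC
    simp only [Function.comp_def, hre, Complex.ofReal_re] at this
    exact this
  rw [Metric.tendsto_atTop]
  intro ε hε
  -- find a close element of the span of characters
  have htop : coordAlg.topologicalClosure = ⊤ :=
    ContinuousMap.starSubalgebra_topologicalClosure_eq_top_of_separatesPoints _ coordAlg_separates
  have hFmem : F ∈ coordAlg.topologicalClosure := by rw [htop]; trivial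
  have hFcl : F ∈ closure (coordAlg : Set C(TT, ℂ)) := hFmem
  rw [Metric.mem_closure_iff] at hFcl
  obtain ⟨g, hgA, hgdist⟩ := hFcl (ε / 4) (by linarith)
  have hgspan : g ∈ Submodule.span ℂ chiSet := coordAlg_le_span hgA
  have hgt := span_tendsto hinv hgspan
  rw [Metric.tendsto_atTop] at hgt
  obtain ⟨N, hN⟩ := hgt (ε / 4) (by linarith)
  refine ⟨N, fun n hn => ?_⟩
  have hdiff : ∀ (ν : Measure TT) [IsProbabilityMeasure ν],
      dist (∫ p, F p ∂ν) (∫ p, g p ∂ν) ≤ ‖F - g‖ := by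
    intro ν hν
    rw [dist_eq_norm, ← integral_sub (cont_integrable F ν) (cont_integrable g ν)]
    have : ∀ p, F p - g p = (F - g) p := fun p => rfl
    simp only [this]
    exact norm_integral_le (F - g) ν
  have hFg : ‖F - g‖ < ε / 4 := by
    rw [← dist_eq_norm]
    exact hgdist
  calc dist (∫ p, F p ∂(μ.map (torusAut ^ (n : ℤ)))) (∫ p, F p ∂haarTT)
      ≤ dist (∫ p, F p ∂(μ.map (torusAut ^ (n : ℤ)))) (∫ p, g p ∂(μ.map (torusAut ^ (n : ℤ))))
        + dist (∫ p, g p ∂(μ.map (torusAut ^ (n : ℤ)))) (∫ p, g p ∂haarTT)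
        + dist (∫ p, g p ∂haarTT) (∫ p, F p ∂haarTT) := dist_triangle4 _ _ _ _
    _ < ε / 4 + ε / 4 + ε / 4 := by
        refine add_lt_add (add_lt_add_of_le_of_lt (le_trans (hdiff _) hFg.le) (hN n hn)) ?_
        rw [dist_comm]
        exact lt_of_le_of_lt (hdiff _) hFg
    _ < ε := by linarith

abbrev haarC : Measure Circle :=
  Measure.haarMeasure (⊤ : TopologicalSpace.PositiveCompacts Circle)

instance : IsProbabilityMeasure haarC :=
  ⟨by rw [← TopologicalSpace.PositiveCompacts.coe_top]; exact Measure.haarMeasure_self⟩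

/-- The embedding `z ↦ (c, z)` of the circle into the torus. -/
def emb (c : Circle) : Circle → TT := fun z => (c, z)

lemma emb_continuous (c : Circle) : Continuous (emb c) :=
  continuous_const.prodMk continuous_id

instance emb_prob (c : Circle) : IsProbabilityMeasure (haarC.map (emb c)) :=
  Measure.isProbabilityMeasure_map (emb_continuous c).measurable.aemeasurable

lemma emb_inv (c : Circle) (z : Circle) :
    (haarC.map (emb c)).map (fun p => ((1, z) : TT) * p) = haarC.map (emb c) := by
  rw [Measure.map_map (continuous_mul_left ((1, z) : TT)).measurable
    (emb_continuous c).measurable]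
  have hcomp : (fun p => ((1, z) : TT) * p) ∘ emb c = emb c ∘ (fun w => z * w) := by
    funext w
    simp [emb, Prod.ext_iff]
  rw [hcomp, ← Measure.map_map (emb_continuous c).measurable
    (continuous_mul_left z).measurable,
    MeasureTheory.map_mul_left_eq_self]

lemma emb_integral_chi (c : Circle) :
    ∫ p, chi 1 0 p ∂(haarC.map (emb c)) = (c : ℂ) := by
  rw [integral_map (emb_continuous c).measurable.aemeasurable
    ((chi 1 0).continuous.aestronglyMeasurable)]
  have : ∀ w : Circle, chi 1 0 (emb c w) = (c : ℂ) := by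
    intro w
    simp [chi_apply, emb]
  simp only [this, integral_const, measure_univ, probReal_univ, ENNReal.toReal_one, one_smul]

lemma emb_ne : haarC.map (emb 1) ≠ haarC.map (emb (Circle.exp Real.pi)) := by
  intro h
  have h2 := congrArg (fun ν => ∫ p, chi 1 0 p ∂ν) h
  simp only [emb_integral_chi] at h2
  exact circle_exp_pi_ne_one (by simpa using h2.symm)

end

end TorusAutProof

/-- If `μ` is a probability measure on `𝕋²` invariant under translation
by the subgroup `L = {(1, z)}`, then some subsequence of the pushforwards `α^{kₙ}(μ)`
converges weakly to the normalized Haar measure of `𝕋²`; consequently the action of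
`⟨α⟩` on the space of probability measures of `𝕋²` is not distal. -/
theorem torusAut_pushforward_tendsto_haar
    (μ : Measure (Circle × Circle)) (hμ : IsProbabilityMeasure μ)
    (hinv : ∀ z : Circle, μ.map (fun p => ((1, z) : Circle × Circle) * p) = μ) :
    (∃ k : ℕ → ℕ, StrictMono k ∧
      WeakTendsto (fun n => μ.map (torusAut ^ (k n : ℤ)))
        (Measure.haarMeasure (⊤ : TopologicalSpace.PositiveCompacts (Circle × Circle)))) ∧
    ¬ (∀ μ' ν' : Measure (Circle × Circle),
        IsProbabilityMeasure μ' → IsProbabilityMeasure ν' → μ' ≠ ν' →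
        ¬ ∃ (k : ℕ → ℤ) (ρ : Measure (Circle × Circle)),
            WeakTendsto (fun n => μ'.map (torusAut ^ k n)) ρ ∧
            WeakTendsto (fun n => ν'.map (torusAut ^ k n)) ρ) := by
  constructor
  · exact ⟨fun n => n, strictMono_id, TorusAutProof.main_tendsto hμ hinv⟩
  · intro H
    refine H (TorusAutProof.haarC.map (TorusAutProof.emb 1))
      (TorusAutProof.haarC.map (TorusAutProof.emb (Circle.exp Real.pi)))
      inferInstance inferInstance TorusAutProof.emb_ne
      ⟨fun n => (n : ℤ), TorusAutProof.haarTT,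
        TorusAutProof.main_tendsto inferInstance (TorusAutProof.emb_inv 1),
        TorusAutProof.main_tendsto inferInstance (TorusAutProof.emb_inv _)⟩
end
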